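/- arXiv:1912.03505 — 8 statements merged into one kernel-verified Lean document; each statement's English description precedes it below -/
import Mathlib

section
/- Let (X,𝒪) be an L-valued topological space and u an open filter of X. Then for every B ∈ 𝒪 it holds that u(B) = ⨆_{A∈𝒪} u(A) ⊓ sub(A,B) and u(B) = ⨅_{A∈𝒪} (sub(B,A) ⇨ u(A)). -/
variable {L : Type*} {X : Type*} {Y : Type*}

/-- `sub(A,B) = ⨅ x, A x ⇨ B x` for `L`-subsets `A B : X → L`. -/
def subL [Order.Frame L] (A B : X → L) : L := ⨅ x, A x ⇨ B x

/-- An `L`-valued topology on `X`: a family of `L`-subsets closed under binary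
pointwise infima, arbitrary pointwise suprema, containing all constants. -/
structure IsLTopology [Order.Frame L] (𝒪 : Set (X → L)) : Prop where
  inf_mem : ∀ A B : X → L, A ∈ 𝒪 → B ∈ 𝒪 → A ⊓ B ∈ 𝒪
  sSup_mem : ∀ S : Set (X → L), S ⊆ 𝒪 → sSup S ∈ 𝒪
  const_mem : ∀ a : L, (fun _ => a : X → L) ∈ 𝒪

/-- An open filter of `(X, 𝒪)`: a map `u : 𝒪 → L` with `u (A ⊓ B) = u A ⊓ u B`
and `u (a_X) ≥ a`. -/
structure LFilter [Order.Frame L] (𝒪 : Set (X → L)) where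
  toFun : ↥𝒪 → L
  map_inf : ∀ (A B : ↥𝒪) (h : (A : X → L) ⊓ (B : X → L) ∈ 𝒪),
    toFun ⟨(A : X → L) ⊓ (B : X → L), h⟩ = toFun A ⊓ toFun B
  const_le : ∀ (a : L) (h : (fun _ => a : X → L) ∈ 𝒪), a ≤ toFun ⟨fun _ => a, h⟩

/-- `φ(A)(u) = u(A)`. -/
def phiF [Order.Frame L] (𝒪 : Set (X → L)) (A : ↥𝒪) : LFilter 𝒪 → L := fun u => u.toFun A

/-- The `L`-valued topology on `Φ_L(X)` generated by the base `{φ(A) | A ∈ 𝒪}`: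
its members are exactly the suprema `⨆_j φ(A_j) ⊓ (a_j)_const`. -/
def filtOpens [Order.Frame L] (𝒪 : Set (X → L)) : Set (LFilter 𝒪 → L) :=
  { W | ∃ S : Set (↥𝒪 × L), W = fun u => ⨆ p ∈ S, u.toFun p.1 ⊓ p.2 }

/-- The pointed filter `[x](A) = A(x)`. -/
def ptFilter [Order.Frame L] (𝒪 : Set (X → L)) (x : X) : LFilter 𝒪 where
  toFun A := (A : X → L) x
  map_inf _ _ _ := rfl
  const_le _ _ := le_rfl

/-- The filter `[S](A) = sub(S, A)` for an `L`-subset `S`. -/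
def prFilter [Order.Frame L] (𝒪 : Set (X → L)) (S : X → L) : LFilter 𝒪 where
  toFun A := subL S (A : X → L)
  map_inf A B h := by
    simp only [subL, Pi.inf_apply, himp_inf_distrib]
    exact iInf_inf_eq
  const_le a h := le_iInf fun x => le_himp_iff.2 inf_le_left

/-- `Φ_L f` for a continuous map `f`. -/
def filtMap [Order.Frame L] (𝒪X : Set (X → L)) (𝒪Y : Set (Y → L)) (f : X → Y)
    (hf : ∀ B : ↥𝒪Y, (B : Y → L) ∘ f ∈ 𝒪X) (u : LFilter 𝒪X) : LFilter 𝒪Y where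
  toFun B := u.toFun ⟨(B : Y → L) ∘ f, hf B⟩
  map_inf A B h := u.map_inf ⟨(A : Y → L) ∘ f, hf A⟩ ⟨(B : Y → L) ∘ f, hf B⟩
    (hf ⟨(A : Y → L) ⊓ (B : Y → L), h⟩)
  const_le a h := u.const_le a (hf ⟨fun _ => a, h⟩)

lemma phi_mem [Order.Frame L] (𝒪 : Set (X → L)) (A : ↥𝒪) : phiF 𝒪 A ∈ filtOpens 𝒪 := by
  refine ⟨{(A, ⊤)}, ?_⟩
  funext u
  simp [phiF]

lemma LFilter.mono [Order.Frame L] {𝒪 : Set (X → L)} (u : LFilter 𝒪) (A B : ↥𝒪)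
    (hAB : (A : X → L) ≤ (B : X → L)) : u.toFun A ≤ u.toFun B := by
  have h : (A : X → L) ⊓ (B : X → L) ∈ 𝒪 := by
    rw [inf_eq_left.2 hAB]; exact A.2
  have h2 := u.map_inf A B h
  have h3 : (⟨(A : X → L) ⊓ (B : X → L), h⟩ : ↥𝒪) = A := Subtype.ext (inf_eq_left.2 hAB)
  rw [h3] at h2
  rw [h2]
  exact inf_le_right

lemma phi_inf [Order.Frame L] (𝒪 : Set (X → L)) (A B : ↥𝒪)
    (h : (A : X → L) ⊓ (B : X → L) ∈ 𝒪) :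
    phiF 𝒪 ⟨(A : X → L) ⊓ (B : X → L), h⟩ = phiF 𝒪 A ⊓ phiF 𝒪 B := by
  funext u
  exact u.map_inf A B h

lemma const_mem_filtOpens [Order.Frame L] (𝒪 : Set (X → L)) (a : L)
    (h : (fun _ => a : X → L) ∈ 𝒪) :
    (fun _ => a : LFilter 𝒪 → L) ∈ filtOpens 𝒪 := by
  refine ⟨{(⟨fun _ => a, h⟩, a)}, ?_⟩
  funext u
  simp only [Set.mem_singleton_iff, iSup_iSup_eq_left]
  exact (inf_eq_right.2 (u.const_le a h)).symm

/-- `μ_X(α)(A) = α(φ(A))`. -/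
def muF [Order.Frame L] (𝒪 : Set (X → L)) (α : LFilter (filtOpens 𝒪)) : LFilter 𝒪 where
  toFun A := α.toFun ⟨phiF 𝒪 A, phi_mem 𝒪 A⟩
  map_inf A B h := by
    have h' : phiF 𝒪 A ⊓ phiF 𝒪 B ∈ filtOpens 𝒪 := phi_inf 𝒪 A B h ▸ phi_mem 𝒪 ⟨_, h⟩
    have h2 := α.map_inf ⟨phiF 𝒪 A, phi_mem 𝒪 A⟩ ⟨phiF 𝒪 B, phi_mem 𝒪 B⟩ h'
    have h3 : (⟨phiF 𝒪 ⟨(A : X → L) ⊓ (B : X → L), h⟩, phi_mem 𝒪 ⟨_, h⟩⟩ :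
        ↥(filtOpens 𝒪)) = ⟨phiF 𝒪 A ⊓ phiF 𝒪 B, h'⟩ := Subtype.ext (phi_inf 𝒪 A B h)
    show α.toFun ⟨phiF 𝒪 ⟨(A : X → L) ⊓ (B : X → L), h⟩, phi_mem 𝒪 ⟨_, h⟩⟩ =
      α.toFun ⟨phiF 𝒪 A, phi_mem 𝒪 A⟩ ⊓ α.toFun ⟨phiF 𝒪 B, phi_mem 𝒪 B⟩
    rw [h3]
    exact h2
  const_le a h := by
    have h1 : (fun _ => a : LFilter 𝒪 → L) ∈ filtOpens 𝒪 := const_mem_filtOpens 𝒪 a h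
    have h2 : (fun _ => a : LFilter 𝒪 → L) ≤ phiF 𝒪 ⟨fun _ => a, h⟩ :=
      fun u => u.const_le a h
    exact le_trans (α.const_le a h1) (α.mono ⟨_, h1⟩ ⟨_, phi_mem 𝒪 ⟨_, h⟩⟩ h2)

lemma filtMap_continuous [Order.Frame L] (𝒪X : Set (X → L)) (𝒪Y : Set (Y → L)) (f : X → Y)
    (hf : ∀ B : ↥𝒪Y, (B : Y → L) ∘ f ∈ 𝒪X) :
    ∀ W ∈ filtOpens 𝒪Y, (W ∘ filtMap 𝒪X 𝒪Y f hf) ∈ filtOpens 𝒪X := by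
  rintro W ⟨S, rfl⟩
  refine ⟨(fun p : ↥𝒪Y × L => ((⟨(p.1 : Y → L) ∘ f, hf p.1⟩ : ↥𝒪X), p.2)) '' S, ?_⟩
  funext u
  rw [iSup_image]
  rfl

lemma muF_continuous [Order.Frame L] (𝒪 : Set (X → L)) :
    ∀ W ∈ filtOpens 𝒪, (W ∘ muF 𝒪) ∈ filtOpens (filtOpens 𝒪) := by
  rintro W ⟨S, rfl⟩
  refine ⟨(fun p : ↥𝒪 × L =>
    ((⟨phiF 𝒪 p.1, phi_mem 𝒪 p.1⟩ : ↥(filtOpens 𝒪)), p.2)) '' S, ?_⟩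
  funext α
  rw [iSup_image]
  rfl

lemma ptFilter_continuous [Order.Frame L] (𝒪 : Set (X → L)) (h𝒪 : IsLTopology 𝒪) :
    ∀ W ∈ filtOpens 𝒪, (W ∘ ptFilter 𝒪) ∈ 𝒪 := by
  rintro W ⟨S, rfl⟩
  have key : ((fun u : LFilter 𝒪 => ⨆ p ∈ S, u.toFun p.1 ⊓ p.2) ∘ ptFilter 𝒪) =
      sSup ((fun p : ↥𝒪 × L => (p.1 : X → L) ⊓ fun _ => p.2) '' S) := by
    funext x
    rw [sSup_image', iSup_apply]
    exact (iSup_subtype'' S fun p : ↥𝒪 × L =>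
      ((p.1 : X → L) ⊓ fun _ => p.2 : X → L) x).symm
  rw [key]
  apply h𝒪.sSup_mem
  rintro g ⟨p, _, rfl⟩
  exact h𝒪.inf_mem _ _ p.1.2 (h𝒪.const_mem p.2)

/-- An `L`-order as a binary `L`-relation with the order axioms. -/
structure IsLOrder [Order.Frame L] (e : X → X → L) : Prop where
  refl : ∀ x, e x x = ⊤
  trans : ∀ x y z, e x y ⊓ e y z ≤ e x z
  antisymm : ∀ x y, e x y = ⊤ → e y x = ⊤ → x = y

/-- `s` is a supremum of the `L`-subset `A`. -/
def IsSupE [Order.Frame L] (e : X → X → L) (A : X → L) (s : X) : Prop :=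
  ∀ y, e s y = ⨅ z, A z ⇨ e z y

/-- `i` is an infimum of the `L`-subset `A`. -/
def IsInfE [Order.Frame L] (e : X → X → L) (A : X → L) (i : X) : Prop :=
  ∀ y, e y i = ⨅ z, A z ⇨ e y z

/-- Completeness: every `L`-subset has a supremum. -/
def CompleteE [Order.Frame L] (e : X → X → L) : Prop := ∀ A : X → L, ∃ s, IsSupE e A s

/-- Directedness of an `L`-subset. -/
def DirectedE [Order.Frame L] (e : X → X → L) (D : X → L) : Prop :=
  (⨆ x, D x) = ⊤ ∧ ∀ x y, D x ⊓ D y ≤ ⨆ z, D z ⊓ e x z ⊓ e y z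

/-- An ideal: a directed lower set. -/
def IsIdealE [Order.Frame L] (e : X → X → L) (I : X → L) : Prop :=
  DirectedE e I ∧ ∀ x y, I x ⊓ e y x ≤ I y

/-- `↑x(y) = e(x,y)`. -/
def upE [Order.Frame L] (e : X → X → L) (x : X) : X → L := fun y => e x y

/-- `⇓x(y) = ⨅_{I ideal} (e(x, ⊔I) ⇨ I(y))`. -/
def wbelowE [Order.Frame L] (e : X → X → L) (x y : X) : L :=
  ⨅ I : X → L, ⨅ _ : IsIdealE e I, ⨅ s : X, ⨅ _ : IsSupE e I s, e x s ⇨ I y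

/-- Scott open `L`-subsets. -/
def ScottOpenE [Order.Frame L] (e : X → X → L) (A : X → L) : Prop :=
  (∀ x y, A x ⊓ e x y ≤ A y) ∧
  ∀ D : X → L, DirectedE e D → ∀ s, IsSupE e D s → A s ≤ ⨆ x, A x ⊓ D x

/-- The `L`-Scott topology. -/
def scottOpens [Order.Frame L] (e : X → X → L) : Set (X → L) := { A | ScottOpenE e A }

/-- `u^l(x) = ⨆_{A ∈ σ_L(X)} u(A) ⊓ sub(A, ↑x)`. -/
def lowerOf [Order.Frame L] (e : X → X → L) (u : LFilter (scottOpens e)) : X → L :=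
  fun x => ⨆ A : ↥(scottOpens e), u.toFun A ⊓ subL (A : X → L) (upE e x)

/-- The specialization `L`-order `e(x,y) = ⨅_{A ∈ 𝒪} (A x ⇨ A y)`. -/
def specE [Order.Frame L] (𝒪 : Set (X → L)) (x y : X) : L :=
  ⨅ A : ↥𝒪, (A : X → L) x ⇨ (A : X → L) y

/-- `sub(u,v) = ⨅_{A ∈ 𝒪} (u A ⇨ v A)` for open filters. -/
def subF [Order.Frame L] {𝒪 : Set (X → L)} (u v : LFilter 𝒪) : L :=
  ⨅ A : ↥𝒪, u.toFun A ⇨ v.toFun A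

lemma subL_self [Order.Frame L] (A : X → L) : subL A A = ⊤ := by
  simp [subL]

lemma key_sub [Order.Frame L] {𝒪 : Set (X → L)} (h𝒪 : IsLTopology 𝒪)
    (u : LFilter 𝒪) (A B : ↥𝒪) :
    u.toFun A ⊓ subL (A : X → L) (B : X → L) ≤ u.toFun B := by
  set s := subL (A : X → L) (B : X → L) with hs
  have hsmem : (fun _ => s : X → L) ∈ 𝒪 := h𝒪.const_mem s
  have hmem : (A : X → L) ⊓ (fun _ => s) ∈ 𝒪 := h𝒪.inf_mem _ _ A.2 hsmem
  have hle : (A : X → L) ⊓ (fun _ => s) ≤ (B : X → L) := by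
    intro x
    have : s ≤ (A : X → L) x ⇨ (B : X → L) x := iInf_le _ x
    simpa [inf_comm] using le_himp_iff.1 this
  calc u.toFun A ⊓ s
      ≤ u.toFun A ⊓ u.toFun ⟨fun _ => s, hsmem⟩ :=
        inf_le_inf_left _ (u.const_le s hsmem)
    _ = u.toFun ⟨(A : X → L) ⊓ (fun _ => s), hmem⟩ := (u.map_inf A ⟨_, hsmem⟩ hmem).symm
    _ ≤ u.toFun B := u.mono _ _ hle

/-- For an `L`-valued topological space `(X, 𝒪)` and an open filter `u`,
for every `B ∈ 𝒪`:
`u(B) = ⨆_{A ∈ 𝒪} u(A) ⊓ sub(A,B)` and `u(B) = ⨅_{A ∈ 𝒪} (sub(B,A) ⇨ u(A))`. -/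
theorem stmt0 [Order.Frame L] (𝒪 : Set (X → L)) (h𝒪 : IsLTopology 𝒪)
    (u : LFilter 𝒪) (B : ↥𝒪) :
    u.toFun B = (⨆ A : ↥𝒪, u.toFun A ⊓ subL (A : X → L) (B : X → L)) ∧
    u.toFun B = (⨅ A : ↥𝒪, subL (B : X → L) (A : X → L) ⇨ u.toFun A) := by
  constructor
  · apply le_antisymm
    · calc u.toFun B = u.toFun B ⊓ subL (B : X → L) (B : X → L) := by
            rw [subL_self]; simp
        _ ≤ _ := le_iSup (fun A : ↥𝒪 => u.toFun A ⊓ subL (A : X → L) (B : X → L)) B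
    · exact iSup_le fun A => key_sub h𝒪 u A B
  · apply le_antisymm
    · exact le_iInf fun A => le_himp_iff.2 (key_sub h𝒪 u B A)
    · calc _ ≤ subL (B : X → L) (B : X → L) ⇨ u.toFun B :=
            iInf_le (fun A : ↥𝒪 => subL (B : X → L) (A : X → L) ⇨ u.toFun A) B
        _ = u.toFun B := by rw [subL_self]; simp
end

section
/- Let (X,𝒪) be an L-valued topological space and let α be an open filter of the space Φ_L(X) (i.e. α ∈ Φ²_L(X)). Then μ_X(α), defined by μ_X(α)(A) = α(φ(A)) for A ∈ 𝒪, is an open filter of X. -/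
variable {L : Type*} {X : Type*} {Y : Type*}

/-- For every open filter `α` of the space `Φ_L(X)`, the map
`μ_X(α) : A ↦ α(φ(A))` is an open filter of `X`. -/
theorem stmt5 [Order.Frame L] (𝒪 : Set (X → L)) (h𝒪 : IsLTopology 𝒪)
    (α : LFilter (filtOpens 𝒪)) :
    (∀ (A B : ↥𝒪) (h : (A : X → L) ⊓ (B : X → L) ∈ 𝒪),
      α.toFun ⟨phiF 𝒪 ⟨(A : X → L) ⊓ (B : X → L), h⟩, phi_mem 𝒪 ⟨_, h⟩⟩ =
        α.toFun ⟨phiF 𝒪 A, phi_mem 𝒪 A⟩ ⊓ α.toFun ⟨phiF 𝒪 B, phi_mem 𝒪 B⟩) ∧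
    ∀ (a : L) (h : (fun _ => a : X → L) ∈ 𝒪),
      a ≤ α.toFun ⟨phiF 𝒪 ⟨fun _ => a, h⟩, phi_mem 𝒪 ⟨_, h⟩⟩ := by
  exact ⟨(muF 𝒪 α).map_inf, (muF 𝒪 α).const_le⟩
end

section
/- Let (X,𝒪(X)) and (Y,𝒪(Y)) be L-valued topological spaces. Then (1) for every A ∈ 𝒪(X), (μ_X)⁻(φ(A)) = φ(φ(A)), so that μ_X : Φ²_L(X) → Φ_L(X) is continuous; and (2) for every continuous map f : X → Y, μ_Y ∘ (Φ²_L f) = (Φ_L f) ∘ μ_X (naturality of μ). -/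
variable {L : Type*} {X : Type*} {Y : Type*}

/-- (1) `(μ_X)⁻(φ(A)) = φ(φ(A))` for every `A ∈ 𝒪(X)`, so `μ_X` is
continuous; (2) for every continuous `f : X → Y`, `μ_Y ∘ Φ²_L f = Φ_L f ∘ μ_X`. -/
theorem stmt6 [Order.Frame L] (𝒪X : Set (X → L)) (𝒪Y : Set (Y → L))
    (hX : IsLTopology 𝒪X) (hY : IsLTopology 𝒪Y) :
    ((∀ A : ↥𝒪X, (phiF 𝒪X A) ∘ (muF 𝒪X) =
        phiF (filtOpens 𝒪X) ⟨phiF 𝒪X A, phi_mem 𝒪X A⟩) ∧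
      ∀ W ∈ filtOpens 𝒪X, (W ∘ muF 𝒪X) ∈ filtOpens (filtOpens 𝒪X)) ∧
    ∀ (f : X → Y) (hf : ∀ B : ↥𝒪Y, (B : Y → L) ∘ f ∈ 𝒪X)
      (α : LFilter (filtOpens 𝒪X)),
      muF 𝒪Y (filtMap (filtOpens 𝒪X) (filtOpens 𝒪Y) (filtMap 𝒪X 𝒪Y f hf)
        (fun W => filtMap_continuous 𝒪X 𝒪Y f hf W.1 W.2) α) =
      filtMap 𝒪X 𝒪Y f hf (muF 𝒪X α) := by
  refine ⟨⟨fun A => rfl, muF_continuous 𝒪X⟩, ?_⟩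
  intro f hf α
  have hext : ∀ (u v : LFilter 𝒪Y), u.toFun = v.toFun → u = v := by
    intro u v h; cases u; cases v; simpa using h
  apply hext
  funext B
  exact congrArg α.toFun (Subtype.ext (funext fun u => rfl))
end

section
/- For every T0 L-valued topological space (X,𝒪), the monad laws hold: μ_X ∘ Φ_L(μ_X) = μ_X ∘ μ_{Φ_L(X)} as maps Φ³_L(X) → Φ_L(X), and μ_X ∘ η_{Φ_L(X)} = id_{Φ_L(X)} = μ_X ∘ Φ_L(η_X). Hence (Φ_L, η, μ) is a monad over the category of T0 L-valued topological spaces. -/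
variable {L : Type*} {X : Type*} {Y : Type*}

lemma LFilter.ext' [Order.Frame L] {𝒪 : Set (X → L)} {u v : LFilter 𝒪}
    (h : u.toFun = v.toFun) : u = v := by
  cases u; cases v; simpa using h

/-- For every `T0` `L`-valued topological space `(X, 𝒪)`, the monad laws
hold: `μ_X ∘ Φ_L(μ_X) = μ_X ∘ μ_{Φ_L(X)}` and
`μ_X ∘ η_{Φ_L(X)} = id = μ_X ∘ Φ_L(η_X)`; hence `(Φ_L, η, μ)` is a monad. -/
theorem stmt7 [Order.Frame L] (𝒪 : Set (X → L)) (h𝒪 : IsLTopology 𝒪)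
    (hT0 : ∀ x y : X, (∀ A ∈ 𝒪, A x = A y) → x = y) :
    (∀ Ξ : LFilter (filtOpens (filtOpens 𝒪)),
      muF 𝒪 (filtMap (filtOpens (filtOpens 𝒪)) (filtOpens 𝒪) (muF 𝒪)
        (fun W => muF_continuous 𝒪 W.1 W.2) Ξ) =
      muF 𝒪 (muF (filtOpens 𝒪) Ξ)) ∧
    (∀ u : LFilter 𝒪, muF 𝒪 (ptFilter (filtOpens 𝒪) u) = u) ∧
    ∀ u : LFilter 𝒪,
      muF 𝒪 (filtMap 𝒪 (filtOpens 𝒪) (ptFilter 𝒪)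
        (fun W => ptFilter_continuous 𝒪 h𝒪 W.1 W.2) u) = u := by
  refine ⟨fun Ξ => ?_, fun u => ?_, fun u => ?_⟩
  · apply LFilter.ext'
    funext A
    exact congrArg Ξ.toFun (Subtype.ext (funext fun α => rfl))
  · apply LFilter.ext'
    funext A
    rfl
  · apply LFilter.ext'
    funext A
    exact congrArg u.toFun (Subtype.ext (funext fun x => rfl))
end

section
/- Let (X,e) be a complete L-ordered set equipped with its L-Scott topology σ_L(X), and let u be an open filter of (X, σ_L(X)). Then the L-subset u^l, defined by u^l(x) = ⨆_{A ∈ σ_L(X)} u(A) ⊓ sub(A, ↑x), is an ideal of (X,e). -/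
variable {L : Type*} {X : Type*} {Y : Type*}

section Stmt9Aux

variable [Order.Frame L] {e : X → X → L}

lemma yonedaE (hord : IsLOrder e) (a b : X) : e a b = ⨅ w, e b w ⇨ e a w := by
  apply le_antisymm
  · exact le_iInf fun w => le_himp_iff.2 (hord.trans a b w)
  · calc ⨅ w, e b w ⇨ e a w ≤ e b b ⇨ e a b := iInf_le _ b
      _ = e a b := by rw [hord.refl b, top_himp]

lemma exists_infE (hord : IsLOrder e) (hc : CompleteE e) (A : X → L) :
    ∃ i, IsInfE e A i := by
  set P : X → L := fun z => ⨅ w, A w ⇨ e z w with hP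
  obtain ⟨s, hs⟩ := hc P
  refine ⟨s, fun y => ?_⟩
  have hAs : ∀ z, A z ≤ e s z := by
    intro z
    rw [hs z]
    refine le_iInf fun y' => le_himp_iff.2 ?_
    have h1 : P y' ≤ A z ⇨ e y' z := iInf_le _ z
    calc A z ⊓ P y' ≤ A z ⊓ (A z ⇨ e y' z) := inf_le_inf_left _ h1
      _ ≤ e y' z := inf_himp_le
  apply le_antisymm
  · refine le_iInf fun z => le_himp_iff.2 ?_
    calc e y s ⊓ A z ≤ e y s ⊓ e s z := inf_le_inf_left _ (hAs z)
      _ ≤ e y z := hord.trans y s z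
  · rw [yonedaE hord y s]
    refine le_iInf fun w => le_himp_iff.2 ?_
    have h1 : e s w ≤ P y ⇨ e y w := (hs w) ▸ iInf_le _ y
    calc P y ⊓ e s w ≤ P y ⊓ (P y ⇨ e y w) := inf_le_inf_left _ h1
      _ ≤ e y w := inf_himp_le

lemma infE_subL_top (hord : IsLOrder e) {C : X → L} {i : X} (hi : IsInfE e C i) :
    subL C (upE e i) = ⊤ := by
  have := hi i
  rw [hord.refl i] at this
  exact this.symm

lemma infE_eq_subL {C : X → L} {i : X} (hi : IsInfE e C i) (x : X) :
    e x i = subL C (upE e x) := hi x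

lemma const_scottOpen (hord : IsLOrder e) (a : L) :
    (fun _ => a : X → L) ∈ scottOpens e := by
  constructor
  · intro x y; exact inf_le_left
  · intro D hD s _
    have : (⨆ x, a ⊓ D x) = a ⊓ ⨆ x, D x := (inf_iSup_eq _ _).symm
    rw [this, hD.1, inf_top_eq]

lemma inf_scottOpen (hord : IsLOrder e) {A B : X → L}
    (hA : A ∈ scottOpens e) (hB : B ∈ scottOpens e) : A ⊓ B ∈ scottOpens e := by
  constructor
  · intro x y
    have h1 : A x ⊓ B x ⊓ e x y ≤ A y := by
      calc A x ⊓ B x ⊓ e x y ≤ A x ⊓ e x y :=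
            inf_le_inf_right _ inf_le_left
        _ ≤ A y := hA.1 x y
    have h2 : A x ⊓ B x ⊓ e x y ≤ B y := by
      calc A x ⊓ B x ⊓ e x y ≤ B x ⊓ e x y :=
            inf_le_inf_right _ inf_le_right
        _ ≤ B y := hB.1 x y
    exact le_inf h1 h2
  · intro D hD s hs
    have h1 : (A ⊓ B) s ≤ (⨆ w, A w ⊓ D w) ⊓ ⨆ w, B w ⊓ D w :=
      inf_le_inf (hA.2 D hD s hs) (hB.2 D hD s hs)
    refine h1.trans ?_
    rw [iSup_inf_eq]
    refine iSup_le fun w => ?_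
    rw [inf_iSup_eq]
    refine iSup_le fun w' => ?_
    have h2 : A w ⊓ D w ⊓ (B w' ⊓ D w') ≤ (A w ⊓ B w') ⊓ (D w ⊓ D w') := by
      refine le_inf (le_inf ?_ ?_) (le_inf ?_ ?_)
      · exact inf_le_left.trans inf_le_left
      · exact inf_le_right.trans inf_le_left
      · exact inf_le_left.trans inf_le_right
      · exact inf_le_right.trans inf_le_right
    refine h2.trans ?_
    have h3 : (A w ⊓ B w') ⊓ (D w ⊓ D w') ≤
        (A w ⊓ B w') ⊓ ⨆ z, D z ⊓ e w z ⊓ e w' z :=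
      inf_le_inf_left _ (hD.2 w w')
    refine h3.trans ?_
    rw [inf_iSup_eq]
    refine iSup_le fun z => le_iSup_of_le z ?_
    have hAz : A w ⊓ B w' ⊓ (D z ⊓ e w z ⊓ e w' z) ≤ A z := by
      calc A w ⊓ B w' ⊓ (D z ⊓ e w z ⊓ e w' z) ≤ A w ⊓ e w z := by
            refine le_inf (inf_le_left.trans inf_le_left) ?_
            exact inf_le_right.trans (inf_le_left.trans inf_le_right)
        _ ≤ A z := hA.1 w z
    have hBz : A w ⊓ B w' ⊓ (D z ⊓ e w z ⊓ e w' z) ≤ B z := by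
      calc A w ⊓ B w' ⊓ (D z ⊓ e w z ⊓ e w' z) ≤ B w' ⊓ e w' z := by
            refine le_inf (inf_le_left.trans inf_le_right) ?_
            exact inf_le_right.trans inf_le_right
        _ ≤ B z := hB.1 w' z
    have hDz : A w ⊓ B w' ⊓ (D z ⊓ e w z ⊓ e w' z) ≤ D z :=
      inf_le_right.trans (inf_le_left.trans inf_le_left)
    exact le_inf (le_inf hAz hBz) hDz

lemma subL_anti {A A' B : X → L} (h : A' ≤ A) : subL A B ≤ subL A' B :=
  iInf_mono fun x => himp_le_himp_right (h x)

lemma subL_up_inf_e (hord : IsLOrder e) (A : X → L) (x y : X) :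
    subL A (upE e x) ⊓ e y x ≤ subL A (upE e y) := by
  refine le_iInf fun z => le_himp_iff.2 ?_
  calc subL A (upE e x) ⊓ e y x ⊓ A z
      ≤ (A z ⇨ e x z) ⊓ A z ⊓ e y x := by
        refine le_inf (le_inf ?_ inf_le_right) ?_
        · exact inf_le_left.trans (inf_le_left.trans (iInf_le _ z))
        · exact inf_le_left.trans inf_le_right
    _ ≤ e x z ⊓ e y x := inf_le_inf_right _ himp_inf_le
    _ = e y x ⊓ e x z := inf_comm _ _
    _ ≤ e y z := hord.trans y x z

end Stmt9Aux

/-- For a complete `L`-ordered set `(X, e)` and an open filter `u` of the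
`L`-Scott topology, `u^l` is an ideal of `(X, e)`. -/
theorem stmt9 [Order.Frame L] (e : X → X → L) (hord : IsLOrder e) (hc : CompleteE e)
    (u : LFilter (scottOpens e)) :
    IsIdealE e (lowerOf e u) := by
  refine ⟨⟨?_, ?_⟩, ?_⟩
  · -- ⨆ x, lowerOf e u x = ⊤
    have hT : (fun _ => (⊤ : L) : X → L) ∈ scottOpens e := const_scottOpen hord ⊤
    obtain ⟨i, hi⟩ := exists_infE hord hc (fun _ => (⊤ : L) : X → L)
    refine top_unique ?_
    refine le_trans ?_ (le_iSup _ i)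
    have h1 : (⊤ : L) ≤ u.toFun ⟨fun _ => ⊤, hT⟩ := u.const_le ⊤ hT
    have h2 : subL (fun _ => (⊤ : L) : X → L) (upE e i) = ⊤ := infE_subL_top hord hi
    refine le_trans ?_ (le_iSup_of_le (⟨fun _ => ⊤, hT⟩ : ↥(scottOpens e)) le_rfl)
    rw [h2]
    simpa using h1
  · -- directedness
    intro x y
    rw [lowerOf, iSup_inf_eq]
    refine iSup_le fun A => ?_
    rw [lowerOf, inf_iSup_eq]
    refine iSup_le fun B => ?_
    set C : X → L := (A : X → L) ⊓ (B : X → L) with hCdef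
    have hC : C ∈ scottOpens e := inf_scottOpen hord A.2 B.2
    obtain ⟨i, hi⟩ := exists_infE hord hc C
    refine le_trans ?_ (le_iSup _ i)
    have huC : u.toFun A ⊓ u.toFun B = u.toFun ⟨C, hC⟩ := (u.map_inf A B hC).symm
    have hsA : subL (A : X → L) (upE e x) ≤ e x i := by
      rw [infE_eq_subL hi x]
      exact subL_anti inf_le_left
    have hsB : subL (B : X → L) (upE e y) ≤ e y i := by
      rw [infE_eq_subL hi y]
      exact subL_anti inf_le_right
    have hli : u.toFun ⟨C, hC⟩ ≤ lowerOf e u i := by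
      refine le_trans ?_ (le_iSup _ (⟨C, hC⟩ : ↥(scottOpens e)))
      rw [infE_subL_top hord hi, inf_top_eq]
    refine le_inf (le_inf ?_ ?_) ?_
    · refine le_trans ?_ hli
      rw [← huC]
      exact inf_le_inf inf_le_left inf_le_left
    · exact le_trans (inf_le_left.trans inf_le_right) hsA
    · exact le_trans (inf_le_right.trans inf_le_right) hsB
  · -- lower set
    intro x y
    rw [lowerOf, iSup_inf_eq]
    refine iSup_le fun A => ?_
    refine le_trans ?_ (le_iSup _ A)
    have h1 : u.toFun A ⊓ subL (A : X → L) (upE e x) ⊓ e y x ≤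
        u.toFun A ⊓ (subL (A : X → L) (upE e x) ⊓ e y x) := by
      rw [inf_assoc]
    exact h1.trans (inf_le_inf_left _ (subL_up_inf_e hord (A : X → L) x y))
end

section
/- Let (X,e) be a complete L-ordered set and u an open filter of (X, σ_L(X)). Then for every x ∈ X, lim_S u(x) = e(x, ⊔(u^l)), where lim_S u(x) = ⨆_{I ideal of X} sub(I, u^l) ⊓ e(x, ⊔I). -/
variable {L : Type*} {X : Type*} {Y : Type*}

section Aux
variable [Order.Frame L] {e : X → X → L}

lemma scottOpen_const (e : X → X → L) (a : L) : ScottOpenE e (fun _ => a) := by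
  refine ⟨fun x y => inf_le_left, fun D hD s _ => ?_⟩
  have : (⨆ x, a ⊓ D x) = a ⊓ ⨆ x, D x := (inf_iSup_eq a D).symm
  rw [this, hD.1, inf_top_eq]

lemma scottOpen_inf (hord : IsLOrder e) {A B : X → L}
    (hA : ScottOpenE e A) (hB : ScottOpenE e B) : ScottOpenE e (A ⊓ B) := by
  constructor
  · intro x y
    refine le_inf ?_ ?_
    · exact le_trans (inf_le_inf_right _ inf_le_left) (hA.1 x y)
    · exact le_trans (inf_le_inf_right _ inf_le_right) (hB.1 x y)
  · intro D hD s hsD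
    have h1 : (A ⊓ B) s ≤ (⨆ x, A x ⊓ D x) ⊓ ⨆ y, B y ⊓ D y :=
      inf_le_inf (hA.2 D hD s hsD) (hB.2 D hD s hsD)
    refine h1.trans ?_
    rw [iSup_inf_eq]
    refine iSup_le fun x => ?_
    rw [inf_iSup_eq]
    refine iSup_le fun y => ?_
    have h2 : A x ⊓ D x ⊓ (B y ⊓ D y) ≤ (A x ⊓ B y) ⊓ (D x ⊓ D y) := by
      refine le_inf (le_inf ?_ ?_) (le_inf ?_ ?_)
      · exact inf_le_left.trans inf_le_left
      · exact inf_le_right.trans inf_le_left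
      · exact inf_le_left.trans inf_le_right
      · exact inf_le_right.trans inf_le_right
    refine h2.trans ?_
    refine le_trans (inf_le_inf_left _ (hD.2 x y)) ?_
    rw [inf_iSup_eq]
    refine iSup_le fun z => le_trans ?_ (le_iSup _ z)
    have hAz : A x ⊓ e x z ≤ A z := hA.1 x z
    have hBz : B y ⊓ e y z ≤ B z := hB.1 y z
    refine le_inf (le_inf ?_ ?_) ?_
    · refine le_trans ?_ hAz
      refine le_inf (inf_le_left.trans inf_le_left) ?_
      exact inf_le_right.trans (inf_le_left.trans inf_le_right)
    · refine le_trans ?_ hBz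
      refine le_inf (inf_le_left.trans inf_le_right) (inf_le_right.trans inf_le_right)
    · exact inf_le_right.trans (inf_le_left.trans inf_le_left)

lemma sup_lb_isInf (hord : IsLOrder e) (C : X → L) (z : X)
    (hz : IsSupE e (fun x => subL C (upE e x)) z) :
    ∀ x, e x z = subL C (upE e x) := by
  intro x
  apply le_antisymm
  · refine le_iInf fun w => le_himp_iff.2 ?_
    have hCz : C w ≤ e z w := by
      rw [hz w]
      refine le_iInf fun x' => le_himp_iff.2 ?_
      rw [inf_comm]
      exact le_trans (inf_le_inf_right _ (iInf_le _ w)) himp_inf_le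
    exact le_trans (inf_le_inf_left _ hCz) (hord.trans x z w)
  · have h := hz z
    rw [hord.refl z] at h
    have h2 : subL C (upE e x) ⇨ e x z = ⊤ :=
      top_unique (h.le.trans (iInf_le _ x))
    exact himp_eq_top_iff.1 h2

lemma exists_botE (hord : IsLOrder e) (hc : CompleteE e) : ∃ b : X, ∀ y, e b y = ⊤ := by
  obtain ⟨b, hb⟩ := hc (fun _ => ⊥)
  refine ⟨b, fun y => ?_⟩
  rw [hb y]
  simp

lemma lowerOf_lowerset (hord : IsLOrder e) (u : LFilter (scottOpens e)) :
    ∀ x y, lowerOf e u x ⊓ e y x ≤ lowerOf e u y := by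
  intro x y
  unfold lowerOf
  rw [iSup_inf_eq]
  refine iSup_le fun A => le_trans ?_ (le_iSup _ A)
  rw [inf_assoc]
  refine inf_le_inf_left _ ?_
  refine le_iInf fun z => le_himp_iff.2 ?_
  calc subL (A : X → L) (upE e x) ⊓ e y x ⊓ (A : X → L) z
      ≤ ((A : X → L) z ⇨ e x z) ⊓ (A : X → L) z ⊓ e y x := by
        refine le_inf (le_inf ?_ inf_le_right) ?_
        · exact inf_le_left.trans (inf_le_left.trans (iInf_le _ z))
        · exact inf_le_left.trans inf_le_right
    _ ≤ e x z ⊓ e y x := inf_le_inf_right _ himp_inf_le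
    _ ≤ e y x ⊓ e x z := inf_comm _ _ |>.le
    _ ≤ e y z := hord.trans y x z

lemma lowerOf_ideal (hord : IsLOrder e) (hc : CompleteE e) (u : LFilter (scottOpens e)) :
    IsIdealE e (lowerOf e u) := by
  refine ⟨⟨?_, ?_⟩, lowerOf_lowerset hord u⟩
  · -- ⨆ x, lowerOf e u x = ⊤
    obtain ⟨b, hb⟩ := exists_botE hord hc
    refine top_unique (le_trans ?_ (le_iSup _ b))
    have hT : ((fun _ => ⊤ : X → L)) ∈ scottOpens e := scottOpen_const e ⊤
    refine le_trans ?_ (le_iSup (fun A : ↥(scottOpens e) =>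
      u.toFun A ⊓ subL (A : X → L) (upE e b)) ⟨_, hT⟩)
    refine le_inf (u.const_le ⊤ hT) (le_iInf fun z => ?_)
    rw [upE, hb z]
    exact le_himp_iff.2 le_top
  · -- directedness
    intro x y
    unfold lowerOf
    rw [iSup_inf_eq]
    refine iSup_le fun A => ?_
    rw [inf_iSup_eq]
    refine iSup_le fun B => ?_
    -- C = A ⊓ B
    have hC : (A : X → L) ⊓ (B : X → L) ∈ scottOpens e := scottOpen_inf hord A.2 B.2
    obtain ⟨z, hz⟩ := hc (fun w => subL ((A : X → L) ⊓ (B : X → L)) (upE e w))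
    have hinf := sup_lb_isInf hord ((A : X → L) ⊓ (B : X → L)) z hz
    have hsubA : subL (A : X → L) (upE e x) ≤ e x z := by
      rw [hinf x]
      exact le_iInf fun w => (iInf_le _ w).trans (himp_le_himp_right inf_le_left)
    have hsubB : subL (B : X → L) (upE e y) ≤ e y z := by
      rw [hinf y]
      exact le_iInf fun w => (iInf_le _ w).trans (himp_le_himp_right inf_le_right)
    have huC : u.toFun A ⊓ u.toFun B ≤ lowerOf e u z := by
      rw [← u.map_inf A B hC]
      refine le_trans ?_ (le_iSup (fun A' : ↥(scottOpens e) =>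
        u.toFun A' ⊓ subL (A' : X → L) (upE e z)) ⟨_, hC⟩)
      refine le_inf le_rfl ?_
      rw [← hinf z, hord.refl z]
      exact le_top
    refine le_trans ?_ (le_iSup _ z)
    refine le_inf (le_inf ?_ ?_) ?_
    · refine le_trans ?_ huC
      exact inf_le_inf inf_le_left inf_le_left
    · exact inf_le_left.trans (inf_le_right.trans hsubA)
    · exact inf_le_right.trans (inf_le_right.trans hsubB)

end Aux

/-- For a complete `L`-ordered set `(X, e)` and an open filter `u` of the
`L`-Scott topology, `lim_S u (x) = e(x, ⊔(u^l))`, where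
`lim_S u (x) = ⨆_{I ideal} sub(I, u^l) ⊓ e(x, ⊔I)`. -/
theorem stmt10 [Order.Frame L] (e : X → X → L) (hord : IsLOrder e) (hc : CompleteE e)
    (u : LFilter (scottOpens e)) (x s : X) (hs : IsSupE e (lowerOf e u) s) :
    (⨆ I : X → L, ⨆ _ : IsIdealE e I, ⨆ sI : X, ⨆ _ : IsSupE e I sI,
      subL I (lowerOf e u) ⊓ e x sI) = e x s := by
  apply le_antisymm
  · refine iSup_le fun I => iSup_le fun _ => iSup_le fun sI => iSup_le fun hsI => ?_
    have h1 : ∀ z, lowerOf e u z ≤ e z s := by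
      intro z
      have h := hs s
      rw [hord.refl s] at h
      exact himp_eq_top_iff.1 (top_unique (h.le.trans (iInf_le _ z)))
    have h2 : subL I (lowerOf e u) ≤ e sI s := by
      rw [hsI s]
      refine le_iInf fun z => le_himp_iff.2 ?_
      calc subL I (lowerOf e u) ⊓ I z ≤ (I z ⇨ lowerOf e u z) ⊓ I z :=
            inf_le_inf_right _ (iInf_le _ z)
        _ ≤ lowerOf e u z := himp_inf_le
        _ ≤ e z s := h1 z
    calc subL I (lowerOf e u) ⊓ e x sI ≤ e x sI ⊓ e sI s :=
          le_inf inf_le_right (inf_le_left.trans h2)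
      _ ≤ e x s := hord.trans x sI s
  · have hideal : IsIdealE e (lowerOf e u) := lowerOf_ideal hord hc u
    refine le_trans ?_ (le_iSup_of_le (lowerOf e u) (le_iSup_of_le hideal
      (le_iSup_of_le s (le_iSup_of_le hs le_rfl))))
    have : subL (lowerOf e u) (lowerOf e u) = ⊤ := by
      simp [subL]
    rw [this, top_inf_eq]
end

section
/- A complete L-ordered set (X,e) is an L-continuous lattice if and only if x = ⊔([x]^l) holds for every x ∈ X, where [x]^l(y) = ⨆_{A ∈ σ_L(X)} A(x) ⊓ sub(A, ↑y). -/
variable {L : Type*} {X : Type*} {Y : Type*}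

section Stmt11Aux

variable [Order.Frame L] (e : X → X → L)

lemma supE_ub {A : X → L} {s : X} (hord : IsLOrder e) (h : IsSupE e A s) (z : X) :
    A z ≤ e z s := by
  have h1 := h s
  rw [hord.refl] at h1
  have h2 : A z ⇨ e z s = ⊤ := top_le_iff.1 (h1.le.trans (iInf_le _ z))
  exact himp_eq_top_iff.1 h2

lemma down_sup (hord : IsLOrder e) (x : X) : IsSupE e (fun z => e z x) x := by
  intro y
  apply le_antisymm
  · exact le_iInf fun z => le_himp_iff.2 (by rw [inf_comm]; exact hord.trans z x y)
  · refine (iInf_le _ x).trans ?_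
    show e x x ⇨ e x y ≤ e x y
    rw [hord.refl, top_himp]

lemma down_ideal (hord : IsLOrder e) (x : X) : IsIdealE e (fun z => e z x) := by
  refine ⟨⟨?_, ?_⟩, ?_⟩
  · refine top_le_iff.1 (le_trans ?_ (le_iSup (fun z => e z x) x))
    exact (hord.refl x).ge
  · intro a b
    refine le_trans ?_ (le_iSup (fun z => e z x ⊓ e a z ⊓ e b z) x)
    show e a x ⊓ e b x ≤ e x x ⊓ e a x ⊓ e b x
    rw [hord.refl, top_inf_eq]
  · intro a b
    show e a x ⊓ e b a ≤ e b x
    rw [inf_comm]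
    exact hord.trans b a x

lemma wbelow_le {I : X → L} (hI : IsIdealE e I) {s : X} (hs : IsSupE e I s) (x y : X) :
    wbelowE e x y ≤ e x s ⇨ I y :=
  iInf_le_of_le I (iInf_le_of_le hI (iInf_le_of_le s (iInf_le _ hs)))

lemma wbelow_le_down (hord : IsLOrder e) (x y : X) : wbelowE e x y ≤ e y x := by
  have h := wbelow_le e (down_ideal e hord x) (down_sup e hord x) x y
  rwa [hord.refl, top_himp] at h

lemma wbelow_upper (hord : IsLOrder e) (x x' y : X) :
    wbelowE e x y ⊓ e x x' ≤ wbelowE e x' y := by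
  refine le_iInf fun I => le_iInf fun hI => le_iInf fun s => le_iInf fun hs => ?_
  rw [le_himp_iff]
  calc wbelowE e x y ⊓ e x x' ⊓ e x' s
      ≤ (e x s ⇨ I y) ⊓ (e x x' ⊓ e x' s) := by
        rw [inf_assoc]; exact inf_le_inf (wbelow_le e hI hs x y) le_rfl
    _ ≤ (e x s ⇨ I y) ⊓ e x s := inf_le_inf_left _ (hord.trans x x' s)
    _ ≤ I y := himp_inf_le

lemma wbelow_lower (hord : IsLOrder e) (x y y' : X) :
    wbelowE e x y ⊓ e y' y ≤ wbelowE e x y' := by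
  refine le_iInf fun I => le_iInf fun hI => le_iInf fun s => le_iInf fun hs => ?_
  rw [le_himp_iff]
  calc wbelowE e x y ⊓ e y' y ⊓ e x s
      ≤ ((e x s ⇨ I y) ⊓ e x s) ⊓ e y' y := by
        rw [inf_right_comm]
        exact inf_le_inf (inf_le_inf (wbelow_le e hI hs x y) le_rfl) le_rfl
    _ ≤ I y ⊓ e y' y := inf_le_inf himp_inf_le le_rfl
    _ ≤ I y' := hI.2 y y'

lemma exists_bot (hc : CompleteE e) : ∃ b : X, ∀ y, e b y = ⊤ := by
  obtain ⟨b, hb⟩ := hc (fun _ => ⊥)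
  refine ⟨b, fun y => ?_⟩
  rw [hb y]
  simp

lemma ideal_bot {I : X → L} (hI : IsIdealE e I) {b : X} (hb : ∀ y, e b y = ⊤) :
    I b = ⊤ := by
  apply top_le_iff.1
  rw [← hI.1.1]
  refine iSup_le fun y => ?_
  have := hI.2 y b
  rwa [hb y, inf_top_eq] at this

/-- binary join from completeness -/
lemma exists_join (hc : CompleteE e) (a b : X) :
    ∃ c : X, ∀ u, e c u = e a u ⊓ e b u := by
  obtain ⟨c, hcs⟩ := hc (fun z => (⨆ _ : z = a, (⊤ : L)) ⊔ ⨆ _ : z = b, ⊤)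
  refine ⟨c, fun u => ?_⟩
  rw [hcs u]
  apply le_antisymm
  · refine le_inf ?_ ?_
    · refine (iInf_le _ a).trans ?_
      simp
    · refine (iInf_le _ b).trans ?_
      simp
  · refine le_iInf fun z => le_himp_iff.2 ?_
    rw [inf_sup_left]
    refine sup_le ?_ ?_
    · rw [inf_iSup_eq]
      refine iSup_le fun h => ?_
      subst h; exact inf_le_left.trans inf_le_left
    · rw [inf_iSup_eq]
      refine iSup_le fun h => ?_
      subst h; exact inf_le_left.trans inf_le_right

lemma wbelow_inhab (hord : IsLOrder e) (hc : CompleteE e) (x : X) :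
    (⨆ y, wbelowE e x y) = ⊤ := by
  obtain ⟨b, hb⟩ := exists_bot e hc
  apply top_le_iff.1
  refine le_trans ?_ (le_iSup _ b)
  refine le_iInf fun I => le_iInf fun hI => le_iInf fun s => le_iInf fun hs => ?_
  rw [ideal_bot e hI hb, himp_top]

lemma wbelow_ideal (hord : IsLOrder e) (hc : CompleteE e) (x : X) :
    IsIdealE e (wbelowE e x) := by
  refine ⟨⟨wbelow_inhab e hord hc x, ?_⟩, fun a b => wbelow_lower e hord x a b⟩
  intro a b
  obtain ⟨c, hc2⟩ := exists_join e hc a b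
  have hac : e a c = ⊤ := by
    have := hc2 c
    rw [hord.refl] at this
    exact top_le_iff.1 (this.le.trans inf_le_left)
  have hbc : e b c = ⊤ := by
    have := hc2 c
    rw [hord.refl] at this
    exact top_le_iff.1 (this.le.trans inf_le_right)
  have key : wbelowE e x a ⊓ wbelowE e x b ≤ wbelowE e x c := by
    refine le_iInf fun I => le_iInf fun hI => le_iInf fun s => le_iInf fun hs => ?_
    rw [le_himp_iff]
    have h1 : wbelowE e x a ⊓ wbelowE e x b ⊓ e x s ≤ I a ⊓ I b := by
      refine le_inf ?_ ?_
      · calc wbelowE e x a ⊓ wbelowE e x b ⊓ e x s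
            ≤ (e x s ⇨ I a) ⊓ e x s :=
              inf_le_inf ((inf_le_left).trans (wbelow_le e hI hs x a)) le_rfl
          _ ≤ I a := himp_inf_le
      · calc wbelowE e x a ⊓ wbelowE e x b ⊓ e x s
            ≤ (e x s ⇨ I b) ⊓ e x s :=
              inf_le_inf ((inf_le_right).trans (wbelow_le e hI hs x b)) le_rfl
          _ ≤ I b := himp_inf_le
    refine h1.trans ?_
    refine (hI.1.2 a b).trans ?_
    refine iSup_le fun w => ?_
    have : I w ⊓ e a w ⊓ e b w = I w ⊓ e c w := by rw [inf_assoc, ← hc2 w]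
    rw [this]
    exact hI.2 w c
  refine le_trans ?_ (le_iSup _ c)
  rw [hac, hbc, inf_top_eq, inf_top_eq]
  exact key

/-- the ideal `I_D(w) = ⨆ d, D d ⊓ ⇓d(w)` -/
lemma compIdeal (hord : IsLOrder e) (hc : CompleteE e)
    (H : ∀ x, IsSupE e (fun y => wbelowE e x y) x)
    {D : X → L} (hD : DirectedE e D) {s : X} (hs : IsSupE e D s) :
    IsIdealE e (fun w => ⨆ d, D d ⊓ wbelowE e d w) ∧
    IsSupE e (fun w => ⨆ d, D d ⊓ wbelowE e d w) s := by
  constructor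
  · refine ⟨⟨?_, ?_⟩, ?_⟩
    · rw [iSup_comm]
      calc (⨆ d, ⨆ w, D d ⊓ wbelowE e d w)
          = ⨆ d, D d ⊓ ⨆ w, wbelowE e d w := by
            refine iSup_congr fun d => ?_
            rw [inf_iSup_eq]
        _ = ⊤ := by
            conv_rhs => rw [← hD.1]
            refine iSup_congr fun d => ?_
            rw [wbelow_inhab e hord hc d, inf_top_eq]
    · intro a b
      rw [iSup_inf_eq]
      refine iSup_le fun d => ?_
      rw [inf_iSup_eq]
      refine iSup_le fun d' => ?_
      have h1 : D d ⊓ wbelowE e d a ⊓ (D d' ⊓ wbelowE e d' b)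
          ≤ (⨆ c, D c ⊓ e d c ⊓ e d' c) ⊓ (wbelowE e d a ⊓ wbelowE e d' b) := by
        refine le_inf (le_trans ?_ (hD.2 d d')) ?_
        · exact inf_le_inf inf_le_left inf_le_left
        · exact inf_le_inf inf_le_right inf_le_right
      refine h1.trans ?_
      rw [iSup_inf_eq]
      refine iSup_le fun c => ?_
      have h2 : D c ⊓ e d c ⊓ e d' c ⊓ (wbelowE e d a ⊓ wbelowE e d' b)
          ≤ D c ⊓ (wbelowE e c a ⊓ wbelowE e c b) := by
        refine le_inf (inf_le_left.trans (inf_le_left.trans inf_le_left)) (le_inf ?_ ?_)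
        · calc D c ⊓ e d c ⊓ e d' c ⊓ (wbelowE e d a ⊓ wbelowE e d' b)
              ≤ wbelowE e d a ⊓ e d c :=
                le_inf (inf_le_right.trans inf_le_left)
                  (inf_le_left.trans (inf_le_left.trans inf_le_right))
            _ ≤ wbelowE e c a := wbelow_upper e hord d c a
        · calc D c ⊓ e d c ⊓ e d' c ⊓ (wbelowE e d a ⊓ wbelowE e d' b)
              ≤ wbelowE e d' b ⊓ e d' c :=
                le_inf (inf_le_right.trans inf_le_right) (inf_le_left.trans inf_le_right)
            _ ≤ wbelowE e c b := wbelow_upper e hord d' c b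
      refine h2.trans ?_
      have h3 : wbelowE e c a ⊓ wbelowE e c b ≤ ⨆ w, wbelowE e c w ⊓ e a w ⊓ e b w :=
        (wbelow_ideal e hord hc c).1.2 a b
      refine (inf_le_inf_left (D c) h3).trans ?_
      rw [inf_iSup_eq]
      refine iSup_le fun w => ?_
      refine le_trans ?_ (le_iSup (fun w => (⨆ d, D d ⊓ wbelowE e d w) ⊓ e a w ⊓ e b w) w)
      have h4 : D c ⊓ wbelowE e c w ≤ ⨆ d, D d ⊓ wbelowE e d w :=
        le_iSup (fun d => D d ⊓ wbelowE e d w) c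
      calc D c ⊓ (wbelowE e c w ⊓ e a w ⊓ e b w)
          = D c ⊓ wbelowE e c w ⊓ e a w ⊓ e b w := by
            rw [inf_assoc, inf_assoc, inf_assoc]
        _ ≤ (⨆ d, D d ⊓ wbelowE e d w) ⊓ e a w ⊓ e b w :=
            inf_le_inf (inf_le_inf h4 le_rfl) le_rfl
    · intro a b
      rw [iSup_inf_eq]
      refine iSup_le fun d => le_trans ?_ (le_iSup _ d)
      rw [inf_assoc]
      exact inf_le_inf_left _ (wbelow_lower e hord d a b)
  · intro u
    apply le_antisymm
    · refine le_iInf fun w => le_himp_iff.2 ?_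
      have h1 : (⨆ d, D d ⊓ wbelowE e d w) ≤ e w s := by
        refine iSup_le fun d => ?_
        calc D d ⊓ wbelowE e d w ≤ e d s ⊓ e w d :=
              inf_le_inf (supE_ub e hord hs d) (wbelow_le_down e hord d w)
          _ ≤ e w s := by rw [inf_comm]; exact hord.trans w d s
      calc e s u ⊓ ⨆ d, D d ⊓ wbelowE e d w ≤ e w s ⊓ e s u := by
            rw [inf_comm]; exact inf_le_inf h1 le_rfl
        _ ≤ e w u := hord.trans w s u
    · rw [hs u]
      refine le_iInf fun d => le_himp_iff.2 ?_
      rw [H d u]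
      refine le_iInf fun w => le_himp_iff.2 ?_
      have h1 : D d ⊓ wbelowE e d w ≤ ⨆ d', D d' ⊓ wbelowE e d' w :=
        le_iSup (fun d' => D d' ⊓ wbelowE e d' w) d
      calc (⨅ z, (⨆ d', D d' ⊓ wbelowE e d' z) ⇨ e z u) ⊓ D d ⊓ wbelowE e d w
          ≤ ((⨆ d', D d' ⊓ wbelowE e d' w) ⇨ e w u) ⊓ (D d ⊓ wbelowE e d w) := by
            rw [inf_assoc]
            exact inf_le_inf (iInf_le _ w) le_rfl
        _ ≤ ((⨆ d', D d' ⊓ wbelowE e d' w) ⇨ e w u) ⊓ (⨆ d', D d' ⊓ wbelowE e d' w) :=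
            inf_le_inf_left _ h1
        _ ≤ e w u := himp_inf_le

lemma scottOpen_wbelow (hord : IsLOrder e) (hc : CompleteE e)
    (H : ∀ x, IsSupE e (fun y => wbelowE e x y) x) (z : X) :
    ScottOpenE e (fun w => wbelowE e w z) := by
  constructor
  · exact fun x y => wbelow_upper e hord x y z
  · intro D hD s hs
    obtain ⟨hIdl, hSup⟩ := compIdeal e hord hc H hD hs
    have h1 : wbelowE e s z ≤ ⨆ d, D d ⊓ wbelowE e d z := by
      have := wbelow_le e hIdl hSup s z
      rwa [hord.refl, top_himp] at this
    refine h1.trans ?_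
    refine iSup_le fun d => le_trans ?_ (le_iSup (fun x => wbelowE e x z ⊓ D x) d)
    rw [inf_comm]

/-- Lemma A: `[x]^l ≤ ⇓x`. -/
lemma lowerOf_le_wbelow (hord : IsLOrder e) (x y : X) :
    (⨆ A : ↥(scottOpens e), (A : X → L) x ⊓ subL (A : X → L) (upE e y))
      ≤ wbelowE e x y := by
  refine iSup_le fun A => ?_
  refine le_iInf fun I => le_iInf fun hI => le_iInf fun s => le_iInf fun hs => ?_
  rw [le_himp_iff]
  obtain ⟨hup, hsc⟩ := A.2
  calc (A : X → L) x ⊓ subL (A : X → L) (upE e y) ⊓ e x s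
      ≤ (A : X → L) s ⊓ subL (A : X → L) (upE e y) := by
        rw [inf_right_comm]
        exact inf_le_inf (hup x s) le_rfl
    _ ≤ (⨆ w, (A : X → L) w ⊓ I w) ⊓ subL (A : X → L) (upE e y) :=
        inf_le_inf (hsc I hI.1 s hs) le_rfl
    _ ≤ I y := by
        rw [iSup_inf_eq]
        refine iSup_le fun w => ?_
        calc (A : X → L) w ⊓ I w ⊓ subL (A : X → L) (upE e y)
            ≤ I w ⊓ ((A : X → L) w ⊓ ((A : X → L) w ⇨ e y w)) := by
              refine le_inf (inf_le_left.trans inf_le_right) (le_inf ?_ ?_)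
              · exact inf_le_left.trans inf_le_left
              · exact inf_le_right.trans (iInf_le _ w)
          _ ≤ I w ⊓ e y w := inf_le_inf_left _ inf_himp_le
          _ ≤ I y := hI.2 w y

end Stmt11Aux

/-- A complete `L`-ordered set `(X, e)` is an `L`-continuous lattice iff
`x = ⊔([x]^l)` for every `x`, where `[x]^l(y) = ⨆_{A ∈ σ_L(X)} A(x) ⊓ sub(A, ↑y)`. -/
theorem stmt11 [Order.Frame L] (e : X → X → L) (hord : IsLOrder e) (hc : CompleteE e) :
    (∀ x, IsSupE e (fun y => wbelowE e x y) x) ↔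
    (∀ x, IsSupE e (fun y => ⨆ A : ↥(scottOpens e),
      (A : X → L) x ⊓ subL (A : X → L) (upE e y)) x) := by
  constructor
  · intro H x y
    apply le_antisymm
    · refine le_iInf fun z => le_himp_iff.2 ?_
      have h1 : (⨆ A : ↥(scottOpens e), (A : X → L) x ⊓ subL (A : X → L) (upE e z))
          ≤ e z x := (lowerOf_le_wbelow e hord x z).trans (wbelow_le_down e hord x z)
      calc e x y ⊓ ⨆ A : ↥(scottOpens e), (A : X → L) x ⊓ subL (A : X → L) (upE e z)
          ≤ e z x ⊓ e x y := by rw [inf_comm]; exact inf_le_inf h1 le_rfl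
        _ ≤ e z y := hord.trans z x y
    · rw [H x y]
      refine le_iInf fun z => ?_
      refine le_trans (iInf_le
        (fun z => (fun y => ⨆ A : ↥(scottOpens e),
          (A : X → L) x ⊓ subL (A : X → L) (upE e y)) z ⇨ e z y) z) ?_
      refine himp_le_himp_right ?_
      -- ⇓x z ≤ [x]^l z via the Scott open A_z = fun w => ⇓w z
      have hAz : (fun w => wbelowE e w z) ∈ scottOpens e := scottOpen_wbelow e hord hc H z
      refine le_trans ?_
        (le_iSup (fun A : ↥(scottOpens e) =>
          (A : X → L) x ⊓ subL (A : X → L) (upE e z)) ⟨_, hAz⟩)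
      refine le_inf le_rfl ?_
      refine le_iInf fun w => le_himp_iff.2 ?_
      exact inf_le_right.trans (wbelow_le_down e hord w z)
  · intro H x y
    apply le_antisymm
    · refine le_iInf fun z => le_himp_iff.2 ?_
      calc e x y ⊓ wbelowE e x z ≤ e z x ⊓ e x y := by
            rw [inf_comm]; exact inf_le_inf (wbelow_le_down e hord x z) le_rfl
        _ ≤ e z y := hord.trans z x y
    · rw [H x y]
      exact le_iInf fun z => (iInf_le _ z).trans
        (himp_le_himp_right (lowerOf_le_wbelow e hord x z))
end

section
/- Let (X,e) be an L-continuous lattice with L-Scott topology σ_L(X) and r(u) = ⊔(u^l) for open filters u. Then for every A ∈ σ_L(X) and every x ∈ X, ⇓(⊓A)(x) ≤ sub(φ(A), r⁻(⇑x)), i.e. ⇓(⊓A)(x) ≤ ⨅_{u ∈ Φ_L(X)} (u(A) ⇨ ⇓(r(u))(x)). -/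
variable {L : Type*} {X : Type*} {Y : Type*}

/-- For an `L`-continuous lattice `(X, e)`, every `A ∈ σ_L(X)` and
`x ∈ X`: `⇓(⊓A)(x) ≤ sub(φ(A), r⁻(⇑x))`, i.e.
`⇓(⊓A)(x) ≤ ⨅_u (u(A) ⇨ ⇓(r(u))(x))`, where `r(u) = ⊔(u^l)`. -/
theorem stmt13 [Order.Frame L] (e : X → X → L) (hord : IsLOrder e) (hc : CompleteE e)
    (hcont : ∀ x, IsSupE e (fun y => wbelowE e x y) x)
    (A : ↥(scottOpens e)) (x iA : X) (hiA : IsInfE e (A : X → L) iA) :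
    wbelowE e iA x ≤ ⨅ u : LFilter (scottOpens e), ⨅ ru : X,
      ⨅ _ : IsSupE e (lowerOf e u) ru, u.toFun A ⇨ wbelowE e ru x := by
  refine le_iInf fun u => le_iInf fun ru => le_iInf fun hru => le_himp_iff.2 ?_
  -- sub(A, ↑iA) = ⊤ since iA is a lower bound of A
  have hsub : subL (A : X → L) (upE e iA) = ⊤ := by
    have h := (hiA iA).symm
    rw [hord.refl iA] at h
    simpa [subL, upE] using h
  -- u(A) ≤ u^l(iA)
  have h1 : u.toFun A ≤ lowerOf e u iA := by
    have := le_iSup (fun B : ↥(scottOpens e) =>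
      u.toFun B ⊓ subL (B : X → L) (upE e iA)) A
    simpa [lowerOf, hsub] using this
  -- u^l(iA) ≤ e(iA, ru)
  have h2 : lowerOf e u iA ≤ e iA ru := by
    have htop : (⊤ : L) ≤ lowerOf e u iA ⇨ e iA ru := by
      calc (⊤ : L) = e ru ru := (hord.refl ru).symm
        _ = ⨅ z, lowerOf e u z ⇨ e z ru := hru ru
        _ ≤ _ := iInf_le _ iA
    simpa using le_himp_iff.1 htop
  -- e(iA,ru) ⊓ ⇓iA(x) ≤ ⇓ru(x)
  have h3 : e iA ru ⊓ wbelowE e iA x ≤ wbelowE e ru x := by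
    refine le_iInf fun I => le_iInf fun hI => le_iInf fun s => le_iInf fun hs =>
      le_himp_iff.2 ?_
    have hw : wbelowE e iA x ≤ e iA s ⇨ I x :=
      le_trans (iInf_le _ I) (le_trans (iInf_le _ hI)
        (le_trans (iInf_le _ s) (iInf_le _ hs)))
    calc e iA ru ⊓ wbelowE e iA x ⊓ e ru s
        ≤ (e iA ru ⊓ e ru s) ⊓ (e iA s ⇨ I x) := by
          rw [inf_right_comm]
          exact inf_le_inf_left _ hw
      _ ≤ e iA s ⊓ (e iA s ⇨ I x) := inf_le_inf_right _ (hord.trans _ _ _)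
      _ ≤ I x := inf_himp_le
  calc wbelowE e iA x ⊓ u.toFun A ≤ wbelowE e iA x ⊓ e iA ru :=
        inf_le_inf_left _ (h1.trans h2)
    _ = e iA ru ⊓ wbelowE e iA x := inf_comm _ _
    _ ≤ wbelowE e ru x := h3
end
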